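/- For every integer T ≥ 3 and every real δ with 2π ≤ δ ≤ πT, the amplitude magnitude obeys the intermediate bound |α_T(δ)| ≤ 2√2 · π · cos(δ/(2T)) / ( (δ² − π²) · (1 − (δ² + π²)/(12 T²)) ). -/

import Mathlib

open Finset

lemma sin_ge_sub_cube {x : ℝ} (hx : 0 ≤ x) : x - x ^ 3 / 6 ≤ Real.sin x := by
  have key : MonotoneOn (fun y : ℝ => Real.sin y - y + y ^ 3 / 6) (Set.Ici 0) := by
    apply monotoneOn_of_deriv_nonneg (convex_Ici 0)
    · exact ((Real.continuous_sin.sub continuous_id).add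
        ((continuous_pow 3).div_const 6)).continuousOn
    · intro y hy
      exact (((Real.differentiable_sin y).sub (differentiable_id y)).add
        (((differentiable_pow 3) y).div_const 6)).differentiableWithinAt
    · intro y hy
      have hy0 : 0 < y := by simpa using hy
      have hd : HasDerivAt (fun y : ℝ => Real.sin y - y + y ^ 3 / 6)
          (Real.cos y - 1 + (3 * y ^ 2) / 6) y := by
        have := ((Real.hasDerivAt_sin y).sub (hasDerivAt_id y)).add
          ((hasDerivAt_pow 3 y).div_const 6)
        simp at this; exact this
      rw [hd.deriv]
      linarith [Real.one_sub_sq_div_two_le_cos (x := y)]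
  have h0 := key (Set.self_mem_Ici) (Set.mem_Ici.2 hx) hx
  simp only [Real.sin_zero] at h0
  linarith

lemma exp_sq_sub_one (x : ℝ) :
    Complex.exp (Complex.I * x) * Complex.exp (Complex.I * x) - 1
      = Complex.exp (Complex.I * x) * (2 * Complex.I * (Real.sin x : ℂ)) := by
  have h2 := Complex.two_sin (x : ℂ)
  have hI : Complex.I ^ 2 = -1 := Complex.I_sq
  have h3 : Complex.exp ((x:ℂ) * Complex.I) - Complex.exp (-((x:ℂ) * Complex.I))
      = 2 * Complex.I * Complex.sin (x:ℂ) := by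
    have h2' : 2 * Complex.sin (x:ℂ)
        = (Complex.exp (-((x:ℂ) * Complex.I)) - Complex.exp ((x:ℂ) * Complex.I)) * Complex.I := by
      simpa [neg_mul] using h2
    linear_combination (-Complex.I) * h2' -
      (Complex.exp (-((x:ℂ) * Complex.I)) - Complex.exp ((x:ℂ) * Complex.I)) * hI
  have hinv : Complex.exp ((x:ℂ) * Complex.I) * Complex.exp (-((x:ℂ) * Complex.I)) = 1 := by
    rw [← Complex.exp_add]; simp
  rw [Complex.ofReal_sin, mul_comm Complex.I (x:ℂ)]
  linear_combination Complex.exp ((x:ℂ) * Complex.I) * h3 + hinv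

lemma sum_amp_eq (T : ℕ) (hT : 0 < T) (δ : ℝ)
    (hsa : Real.sin ((δ + Real.pi) / (2 * T)) ≠ 0)
    (hsb : Real.sin ((δ - Real.pi) / (2 * T)) ≠ 0) :
    ∑ τ ∈ Finset.range T,
        (Real.sin (Real.pi * (τ + 1 / 2) / T) : ℂ) * Complex.exp (Complex.I * δ * τ / T)
      = -(Complex.exp (Complex.I * δ) + 1) * Complex.exp (-(Complex.I * δ) / (2 * T)) *
        (((Real.sin ((δ + Real.pi) / (2 * T)) - Real.sin ((δ - Real.pi) / (2 * T))) /
          (4 * Real.sin ((δ + Real.pi) / (2 * T)) * Real.sin ((δ - Real.pi) / (2 * T))) : ℝ)) := by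
  have htC : (T : ℂ) ≠ 0 := Nat.cast_ne_zero.2 hT.ne'
  set a : ℝ := (δ + Real.pi) / (2 * T) with ha
  set b : ℝ := (δ - Real.pi) / (2 * T) with hb
  have hsaC : ((Real.sin a : ℝ) : ℂ) ≠ 0 := Complex.ofReal_ne_zero.2 hsa
  have hsbC : ((Real.sin b : ℝ) : ℂ) ≠ 0 := Complex.ofReal_ne_zero.2 hsb
  have hrb : Complex.exp (Complex.I * (δ - Real.pi) / T)
      = Complex.exp (Complex.I * b) * Complex.exp (Complex.I * b) := by
    rw [← Complex.exp_add]; congr 1; rw [hb]; push_cast; field_simp; ring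
  have hra : Complex.exp (Complex.I * (δ + Real.pi) / T)
      = Complex.exp (Complex.I * a) * Complex.exp (Complex.I * a) := by
    rw [← Complex.exp_add]; congr 1; rw [ha]; push_cast; field_simp; ring
  have hrb1 : Complex.exp (Complex.I * (δ - Real.pi) / T) - 1
      = Complex.exp (Complex.I * b) * (2 * Complex.I * (Real.sin b : ℂ)) := by
    rw [hrb]; exact exp_sq_sub_one b
  have hra1 : Complex.exp (Complex.I * (δ + Real.pi) / T) - 1
      = Complex.exp (Complex.I * a) * (2 * Complex.I * (Real.sin a : ℂ)) := by
    rw [hra]; exact exp_sq_sub_one a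
  have hrbne : Complex.exp (Complex.I * (δ - Real.pi) / T) ≠ 1 := by
    intro h
    have h0 : Complex.exp (Complex.I * (δ - Real.pi) / T) - 1 = 0 := by rw [h]; ring
    rw [hrb1] at h0
    exact (mul_ne_zero (Complex.exp_ne_zero _)
      (mul_ne_zero (mul_ne_zero two_ne_zero Complex.I_ne_zero) hsbC)) h0
  have hrane : Complex.exp (Complex.I * (δ + Real.pi) / T) ≠ 1 := by
    intro h
    have h0 : Complex.exp (Complex.I * (δ + Real.pi) / T) - 1 = 0 := by rw [h]; ring
    rw [hra1] at h0
    exact (mul_ne_zero (Complex.exp_ne_zero _)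
      (mul_ne_zero (mul_ne_zero two_ne_zero Complex.I_ne_zero) hsaC)) h0
  have hpb : Complex.exp (Complex.I * (δ - Real.pi) / T) ^ T
      = -Complex.exp (Complex.I * δ) := by
    rw [← Complex.exp_nat_mul]
    have e : (T : ℂ) * (Complex.I * (δ - Real.pi) / T)
        = Complex.I * δ + -((Real.pi : ℂ) * Complex.I) := by field_simp; ring
    rw [e, Complex.exp_add, Complex.exp_neg, Complex.exp_pi_mul_I]
    field_simp
  have hpa : Complex.exp (Complex.I * (δ + Real.pi) / T) ^ T
      = -Complex.exp (Complex.I * δ) := by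
    rw [← Complex.exp_nat_mul]
    have e : (T : ℂ) * (Complex.I * (δ + Real.pi) / T)
        = Complex.I * δ + (Real.pi : ℂ) * Complex.I := by field_simp
    rw [e, Complex.exp_add, Complex.exp_pi_mul_I]
    ring
  have hcb : Complex.exp (-(Complex.I * Real.pi) / (2 * T))
      = Complex.exp (Complex.I * b) * Complex.exp (-(Complex.I * δ) / (2 * T)) := by
    rw [← Complex.exp_add]; congr 1; rw [hb]; push_cast; field_simp; ring
  have hca : Complex.exp ((Complex.I * Real.pi) / (2 * T))
      = Complex.exp (Complex.I * a) * Complex.exp (-(Complex.I * δ) / (2 * T)) := by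
    rw [← Complex.exp_add]; congr 1; rw [ha]; push_cast; field_simp; ring
  have hsummand : ∀ τ ∈ Finset.range T,
      (Real.sin (Real.pi * (τ + 1 / 2) / T) : ℂ) * Complex.exp (Complex.I * δ * τ / T)
      = (Complex.I / 2) *
          (Complex.exp (-(Complex.I * Real.pi) / (2 * T)) * Complex.exp (Complex.I * (δ - Real.pi) / T) ^ τ
           - Complex.exp ((Complex.I * Real.pi) / (2 * T)) * Complex.exp (Complex.I * (δ + Real.pi) / T) ^ τ) := by
    intro τ _
    set x : ℝ := Real.pi * (τ + 1 / 2) / T with hx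
    have hsin : (Real.sin x : ℂ)
        = (Complex.exp (-((x:ℂ) * Complex.I)) - Complex.exp ((x:ℂ) * Complex.I)) * Complex.I / 2 := by
      rw [Complex.ofReal_sin]
      have h2 : 2 * Complex.sin (x:ℂ)
          = (Complex.exp (-((x:ℂ) * Complex.I)) - Complex.exp ((x:ℂ) * Complex.I)) * Complex.I := by
        simpa [neg_mul] using Complex.two_sin (x : ℂ)
      linear_combination h2 / 2
    have e1 : -((x:ℂ) * Complex.I) + Complex.I * δ * τ / T
        = -(Complex.I * Real.pi) / (2 * T) + (τ : ℂ) * (Complex.I * (δ - Real.pi) / T) := by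
      rw [hx]; push_cast; field_simp; ring
    have e2 : (x:ℂ) * Complex.I + Complex.I * δ * τ / T
        = (Complex.I * Real.pi) / (2 * T) + (τ : ℂ) * (Complex.I * (δ + Real.pi) / T) := by
      rw [hx]; push_cast; field_simp; ring
    rw [hsin, ← Complex.exp_nat_mul, ← Complex.exp_nat_mul, ← Complex.exp_add,
      ← Complex.exp_add, ← e1, ← e2, Complex.exp_add, Complex.exp_add]
    ring
  rw [Finset.sum_congr rfl hsummand,
    ← Finset.mul_sum, Finset.sum_sub_distrib, ← Finset.mul_sum, ← Finset.mul_sum,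
    geom_sum_eq hrbne T, geom_sum_eq hrane T, hpa, hpb, hra1, hrb1, hca, hcb]
  simp only [Complex.ofReal_div, Complex.ofReal_mul, Complex.ofReal_sub, Complex.ofReal_ofNat]
  generalize (Real.sin a : ℂ) = sa at hsaC ⊢
  generalize (Real.sin b : ℂ) = sb at hsbC ⊢
  have hA : Complex.exp (Complex.I * (a:ℂ)) ≠ 0 := Complex.exp_ne_zero _
  have hB : Complex.exp (Complex.I * (b:ℂ)) ≠ 0 := Complex.exp_ne_zero _
  generalize Complex.exp (Complex.I * (a:ℂ)) = A at hA ⊢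
  generalize Complex.exp (Complex.I * (b:ℂ)) = B at hB ⊢
  generalize Complex.exp (-(Complex.I * (δ:ℂ)) / (2 * (T:ℂ))) = D
  generalize Complex.exp (Complex.I * (δ:ℂ)) = E
  have h1 : B * D * ((-E - 1) / (B * (2 * Complex.I * sb))) = D * (-E-1) / (2 * Complex.I * sb) := by
    rw [mul_comm B D, mul_assoc, ← mul_div_assoc, mul_div_mul_left _ _ hB, mul_div_assoc]
  have h2 : A * D * ((-E - 1) / (A * (2 * Complex.I * sa))) = D * (-E-1) / (2 * Complex.I * sa) := by
    rw [mul_comm A D, mul_assoc, ← mul_div_assoc, mul_div_mul_left _ _ hA, mul_div_assoc]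
  rw [h1, h2]
  have hI : Complex.I ^ 2 = -1 := Complex.I_sq
  simp only [div_eq_mul_inv, mul_inv, Complex.inv_I]
  field_simp
  linear_combination (D * (E+1) * (sb - sa) + D * (E+1) * (sa - sb) * (1 + 8*sa*sb) + 4*D*(E+1)*(sa-sb)*(1-2*sa*sb)) * hI


/-- The post-QPE amplitude function `α_T(δ) = (√2/T) ∑_{τ=0}^{T-1} sin(π(τ+1/2)/T) e^{iδτ/T}`. -/
noncomputable def amp (T : ℕ) (δ : ℝ) : ℂ :=
  (Real.sqrt 2 / T) * ∑ τ ∈ Finset.range T,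
    (Real.sin (Real.pi * (τ + 1 / 2) / T) : ℂ) * Complex.exp (Complex.I * δ * τ / T)

set_option maxHeartbeats 2000000 in
/-- The purely real-analytic part of the estimate. -/
lemma real_part (t δ : ℝ) (ht3 : 3 ≤ t) (h1 : 2 * Real.pi ≤ δ) (h2 : δ ≤ Real.pi * t) :
    Real.sqrt 2 / t * (2 * ((Real.sin ((δ + Real.pi) / (2 * t)) - Real.sin ((δ - Real.pi) / (2 * t))) /
      (4 * Real.sin ((δ + Real.pi) / (2 * t)) * Real.sin ((δ - Real.pi) / (2 * t)))))
    ≤ 2 * Real.sqrt 2 * Real.pi * Real.cos (δ / (2 * t)) /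
        ((δ ^ 2 - Real.pi ^ 2) * (1 - (δ ^ 2 + Real.pi ^ 2) / (12 * t ^ 2))) := by
  have hπ : 0 < Real.pi := Real.pi_pos
  have hπ315 : Real.pi < 63 / 20 := by
    have := Real.pi_lt_d2
    norm_num at this
    linarith
  have ht0 : (0:ℝ) < t := by linarith
  obtain ⟨a, hadef⟩ : ∃ x : ℝ, x = (δ + Real.pi) / (2 * t) := ⟨_, rfl⟩
  obtain ⟨b, hbdef⟩ : ∃ x : ℝ, x = (δ - Real.pi) / (2 * t) := ⟨_, rfl⟩
  rw [← hadef, ← hbdef]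
  have e1 : a * (2 * t) = δ + Real.pi := by rw [hadef]; field_simp
  have e2 : b * (2 * t) = δ - Real.pi := by rw [hbdef]; field_simp
  have hδeq : δ = t * a + t * b := by linear_combination -(e1 + e2) / 2
  have hπeq : Real.pi = t * a - t * b := by linear_combination -(e1 - e2) / 2
  have ha0 : 0 < a := by rw [hadef]; exact div_pos (by linarith) (by linarith)
  have hb0 : 0 < b := by rw [hbdef]; exact div_pos (by linarith) (by linarith)
  have hπt : 3 * Real.pi ≤ t * Real.pi := mul_le_mul_of_nonneg_right ht3 hπ.le
  have ha23 : a ≤ 2 * Real.pi / 3 := by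
    rw [hadef, div_le_div_iff₀ (by linarith) (by norm_num)]
    linarith
  have haπ : a < Real.pi := by linarith
  have hbhalf : b < Real.pi / 2 := by
    rw [hbdef, div_lt_div_iff₀ (by linarith) (by norm_num)]
    linarith
  have hsa : 0 < Real.sin a := Real.sin_pos_of_pos_of_lt_pi ha0 haπ
  have hsb : 0 < Real.sin b := Real.sin_pos_of_pos_of_lt_pi hb0 (by linarith)
  have hc0 : 0 ≤ Real.cos (δ / (2 * t)) := by
    apply Real.cos_nonneg_of_mem_Icc
    constructor
    · have h' : (0:ℝ) ≤ δ / (2 * t) := div_nonneg (by linarith) (by linarith)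
      linarith
    · rw [div_le_iff₀ (by linarith)]
      linarith
  have hs2t : 0 < Real.pi / (2 * t) := by positivity
  have hs2tπ : Real.pi / (2 * t) < Real.pi := by
    rw [div_lt_iff₀ (by linarith)]
    nlinarith [mul_lt_mul_of_pos_left (show (1:ℝ) < 2 * t by linarith) hπ]
  have hsπ : Real.sin (Real.pi / (2 * t)) ≤ Real.pi / (2 * t) := Real.sin_le hs2t.le
  have hsπ0 : 0 ≤ Real.sin (Real.pi / (2 * t)) :=
    (Real.sin_pos_of_pos_of_lt_pi hs2t hs2tπ).le
  have harg1 : (a - b) / 2 = Real.pi / (2 * t) := by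
    rw [hadef, hbdef]; field_simp; ring
  have harg2 : (a + b) / 2 = δ / (2 * t) := by
    rw [hadef, hbdef]; field_simp; ring
  have hdiff : Real.sin a - Real.sin b
      = 2 * Real.sin (Real.pi / (2 * t)) * Real.cos (δ / (2 * t)) := by
    rw [Real.sin_sub_sin, harg1, harg2]
  obtain ⟨K, hKdef⟩ : ∃ x : ℝ, x = 1 - (δ ^ 2 + Real.pi ^ 2) / (12 * t ^ 2) := ⟨_, rfl⟩
  rw [← hKdef]
  have hKeq2 : K = 1 - (a ^ 2 + b ^ 2) / 6 := by
    rw [hKdef, hδeq, hπeq]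
    field_simp
    ring
  have hδ2 : δ ^ 2 ≤ Real.pi ^ 2 * t ^ 2 := by
    nlinarith [mul_self_le_mul_self (show (0:ℝ) ≤ δ by linarith) h2]
  have hπ2 : Real.pi ^ 2 < 3969 / 400 := by
    nlinarith [mul_self_lt_mul_self hπ.le hπ315]
  have ht9 : (9:ℝ) ≤ t ^ 2 := by nlinarith [sq_nonneg (t - 3)]
  have hπt2 : Real.pi ^ 2 * t ^ 2 ≤ (3969 / 400) * t ^ 2 :=
    mul_le_mul_of_nonneg_right hπ2.le (sq_nonneg t)
  have hKpos : 0 < K := by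
    rw [hKdef, sub_pos, div_lt_one (by positivity)]
    linarith [hδ2, hπt2, ht9, hπ2]
  have hδπ2 : 0 < δ ^ 2 - Real.pi ^ 2 := by
    nlinarith [mul_self_le_mul_self (by positivity : (0:ℝ) ≤ 2 * Real.pi) h1, sq_nonneg Real.pi,
      mul_pos hπ hπ]
  have hden2 : 0 < (δ ^ 2 - Real.pi ^ 2) * K := mul_pos hδπ2 hKpos
  have hla : a - a ^ 3 / 6 ≤ Real.sin a := sin_ge_sub_cube ha0.le
  have hlb : b - b ^ 3 / 6 ≤ Real.sin b := sin_ge_sub_cube hb0.le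
  have ha21 : a < 21 / 10 := by linarith
  have ha441 : a ^ 2 < 441 / 100 := by nlinarith [mul_self_lt_mul_self ha0.le ha21]
  have hpa : 0 < a - a ^ 3 / 6 := by
    nlinarith [mul_lt_mul_of_pos_left ha441 ha0]
  have hb16 : b < 63 / 40 := by linarith
  have hb25 : b ^ 2 < 5 / 2 := by nlinarith [mul_self_lt_mul_self hb0.le hb16]
  have hpb : 0 < b - b ^ 3 / 6 := by
    nlinarith [mul_lt_mul_of_pos_left hb25 hb0]
  have hprod : (a - a ^ 3 / 6) * (b - b ^ 3 / 6) ≤ Real.sin a * Real.sin b :=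
    mul_le_mul hla hlb hpb.le hsa.le
  have hstep : (δ ^ 2 - Real.pi ^ 2) * K ≤ 4 * t ^ 2 * ((a - a ^ 3 / 6) * (b - b ^ 3 / 6)) := by
    have hrw : (δ ^ 2 - Real.pi ^ 2) * K = 4 * t ^ 2 * (a * b * (1 - (a ^ 2 + b ^ 2) / 6)) := by
      rw [hKeq2, hδeq, hπeq]; ring
    rw [hrw]
    linarith [show (0:ℝ) ≤ 4 * t ^ 2 * ((a * b) ^ 3 / 36) by positivity]
  have hmain : (δ ^ 2 - Real.pi ^ 2) * K ≤ 4 * t ^ 2 * (Real.sin a * Real.sin b) :=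
    hstep.trans (mul_le_mul_of_nonneg_left hprod (by positivity))
  have lhs_eq : Real.sqrt 2 / t * (2 * ((Real.sin a - Real.sin b) /
      (4 * Real.sin a * Real.sin b)))
      = Real.sqrt 2 * Real.sin (Real.pi / (2 * t)) * Real.cos (δ / (2 * t)) /
        (t * (Real.sin a * Real.sin b)) := by
    rw [hdiff]
    field_simp
    ring
  rw [lhs_eq, div_le_div_iff₀ (by positivity) hden2]
  have hq : Real.sin (Real.pi / (2 * t)) * (2 * t) ≤ Real.pi := (le_div_iff₀ (by positivity)).1 hsπ
  have hx1 : 0 ≤ Real.sqrt 2 * Real.sin (Real.pi / (2 * t)) * Real.cos (δ / (2 * t)) :=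
    mul_nonneg (mul_nonneg (Real.sqrt_nonneg 2) hsπ0) hc0
  have hx2 : 0 ≤ Real.sqrt 2 * Real.cos (δ / (2 * t)) * (2 * t * (Real.sin a * Real.sin b)) :=
    mul_nonneg (mul_nonneg (Real.sqrt_nonneg 2) hc0)
      (mul_nonneg (by linarith) (mul_pos hsa hsb).le)
  linarith [mul_le_mul_of_nonneg_left hmain hx1, mul_le_mul_of_nonneg_right hq hx2]

set_option maxHeartbeats 2000000 in
theorem stmt_5 (T : ℕ) (hT : 3 ≤ T) (δ : ℝ)
    (h1 : 2 * Real.pi ≤ δ) (h2 : δ ≤ Real.pi * T) :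
    ‖amp T δ‖ ≤
      2 * Real.sqrt 2 * Real.pi * Real.cos (δ / (2 * T)) /
        ((δ ^ 2 - Real.pi ^ 2) * (1 - (δ ^ 2 + Real.pi ^ 2) / (12 * T ^ 2))) := by
  have hπ : 0 < Real.pi := Real.pi_pos
  have hπ315 : Real.pi < 3.15 := by have := Real.pi_lt_d2; linarith
  have hT0 : 0 < T := by omega
  have ht3 : (3:ℝ) ≤ (T:ℝ) := by exact_mod_cast hT
  have ht0 : (0:ℝ) < (T:ℝ) := by linarith
  have ha0 : 0 < (δ + Real.pi) / (2 * (T:ℝ)) := div_pos (by linarith) (by linarith)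
  have hb0 : 0 < (δ - Real.pi) / (2 * (T:ℝ)) := div_pos (by linarith) (by linarith)
  have hπt : 3 * Real.pi ≤ (T:ℝ) * Real.pi := mul_le_mul_of_nonneg_right ht3 hπ.le
  have haπ : (δ + Real.pi) / (2 * (T:ℝ)) < Real.pi := by
    rw [div_lt_iff₀ (by linarith)]
    linarith
  have hbπ : (δ - Real.pi) / (2 * (T:ℝ)) < Real.pi := by
    rw [div_lt_iff₀ (by linarith)]
    linarith
  have hsa : 0 < Real.sin ((δ + Real.pi) / (2 * (T:ℝ))) :=
    Real.sin_pos_of_pos_of_lt_pi ha0 haπ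
  have hsb : 0 < Real.sin ((δ - Real.pi) / (2 * (T:ℝ))) :=
    Real.sin_pos_of_pos_of_lt_pi hb0 hbπ
  have hc0 : 0 ≤ Real.cos (δ / (2 * (T:ℝ))) := by
    apply Real.cos_nonneg_of_mem_Icc
    constructor
    · have h' : (0:ℝ) ≤ δ / (2 * (T:ℝ)) := div_nonneg (by linarith) (by linarith)
      linarith
    · rw [div_le_iff₀ (by linarith)]
      linarith
  have hs2t : 0 < Real.pi / (2 * (T:ℝ)) := by positivity
  have hs2tπ : Real.pi / (2 * (T:ℝ)) < Real.pi := by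
    rw [div_lt_iff₀ (by linarith)]
    nlinarith [mul_lt_mul_of_pos_left (show (1:ℝ) < 2 * (T:ℝ) by linarith) hπ]
  have hsπ0 : 0 ≤ Real.sin (Real.pi / (2 * (T:ℝ))) :=
    (Real.sin_pos_of_pos_of_lt_pi hs2t hs2tπ).le
  have harg1 : ((δ + Real.pi) / (2 * (T:ℝ)) - (δ - Real.pi) / (2 * (T:ℝ))) / 2
      = Real.pi / (2 * (T:ℝ)) := by field_simp; ring
  have harg2 : ((δ + Real.pi) / (2 * (T:ℝ)) + (δ - Real.pi) / (2 * (T:ℝ))) / 2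
      = δ / (2 * (T:ℝ)) := by field_simp; ring
  have hnum : 0 ≤ Real.sin ((δ + Real.pi) / (2 * (T:ℝ))) - Real.sin ((δ - Real.pi) / (2 * (T:ℝ))) := by
    rw [Real.sin_sub_sin, harg1, harg2]
    linarith [mul_nonneg hsπ0 hc0]
  have hrnn : 0 ≤ (Real.sin ((δ + Real.pi) / (2 * (T:ℝ))) - Real.sin ((δ - Real.pi) / (2 * (T:ℝ)))) /
      (4 * Real.sin ((δ + Real.pi) / (2 * (T:ℝ))) * Real.sin ((δ - Real.pi) / (2 * (T:ℝ)))) :=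
    div_nonneg hnum (by positivity)
  have hD : ‖Complex.exp (-(Complex.I * (δ:ℂ)) / (2 * (T:ℂ)))‖ = 1 := by
    have htC : (T:ℂ) ≠ 0 := Nat.cast_ne_zero.2 hT0.ne'
    have e : -(Complex.I * (δ:ℂ)) / (2 * (T:ℂ)) = ((-(δ / (2 * (T:ℝ))) : ℝ) : ℂ) * Complex.I := by
      push_cast
      field_simp
    rw [e, Complex.norm_exp_ofReal_mul_I]
  have hE1 : ‖Complex.exp (Complex.I * (δ:ℂ))‖ = 1 := by
    rw [mul_comm]
    exact Complex.norm_exp_ofReal_mul_I δ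
  have hE : ‖Complex.exp (Complex.I * (δ:ℂ)) + 1‖ ≤ 2 := by
    calc ‖Complex.exp (Complex.I * (δ:ℂ)) + 1‖
        ≤ ‖Complex.exp (Complex.I * (δ:ℂ))‖ + ‖(1:ℂ)‖ := norm_add_le _ _
      _ = 2 := by rw [hE1, norm_one]; norm_num
  have key : ‖amp T δ‖
      ≤ Real.sqrt 2 / (T:ℝ) * (2 * ((Real.sin ((δ + Real.pi) / (2 * (T:ℝ))) - Real.sin ((δ - Real.pi) / (2 * (T:ℝ)))) /
        (4 * Real.sin ((δ + Real.pi) / (2 * (T:ℝ))) * Real.sin ((δ - Real.pi) / (2 * (T:ℝ)))))) := by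
    unfold amp
    rw [sum_amp_eq T hT0 δ hsa.ne' hsb.ne']
    rw [norm_mul, norm_mul, norm_mul, norm_div, Complex.norm_real, Real.norm_eq_abs, Complex.norm_natCast,
      norm_neg, hD, Complex.norm_real, Real.norm_eq_abs, abs_of_nonneg (Real.sqrt_nonneg 2),
      abs_of_nonneg hrnn]
    have hnn : 0 ≤ Real.sqrt 2 / (T:ℝ) := by positivity
    have hstep1 : ‖Complex.exp (Complex.I * (δ:ℂ)) + 1‖ * 1 *
          ((Real.sin ((δ + Real.pi) / (2 * (T:ℝ))) - Real.sin ((δ - Real.pi) / (2 * (T:ℝ)))) /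
          (4 * Real.sin ((δ + Real.pi) / (2 * (T:ℝ))) * Real.sin ((δ - Real.pi) / (2 * (T:ℝ)))))
        ≤ 2 * ((Real.sin ((δ + Real.pi) / (2 * (T:ℝ))) - Real.sin ((δ - Real.pi) / (2 * (T:ℝ)))) /
          (4 * Real.sin ((δ + Real.pi) / (2 * (T:ℝ))) * Real.sin ((δ - Real.pi) / (2 * (T:ℝ))))) := by
      rw [mul_one]
      exact mul_le_mul_of_nonneg_right hE hrnn
    exact mul_le_mul_of_nonneg_left hstep1 hnn
  calc ‖amp T δ‖ ≤ _ := key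
    _ ≤ _ := real_part (T:ℝ) δ ht3 h1 h2
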